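/- Assume 1 < α ≤ e² and let b : ℝ → ℝ be a continuous function satisfying the renewal equation b(t) = α·f( ∫₀^∞ β(a)·exp(−μa)·b(t−a) da ) for all t ∈ ℝ, and suppose there exists δ⁻ > 0 with b(t) ≥ δ⁻ for all t ∈ ℝ. Then b(t) = ln α for every t ∈ ℝ. -/

import Mathlib

open MeasureTheory Filter

lemma gm_F_le (x : ℝ) : x * Real.exp (-x) ≤ Real.exp (-1) := by
  have h : x ≤ Real.exp (x - 1) := by
    have := Real.add_one_le_exp (x - 1); linarith
  calc x * Real.exp (-x) ≤ Real.exp (x - 1) * Real.exp (-x) :=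
        mul_le_mul_of_nonneg_right h (Real.exp_pos _).le
    _ = Real.exp (-1) := by rw [← Real.exp_add]; ring_nf

lemma gm_hasDeriv (x : ℝ) :
    HasDerivAt (fun y => y * Real.exp (-y)) ((1 - x) * Real.exp (-x)) x := by
  have h1 : HasDerivAt (fun y : ℝ => Real.exp (-y)) (-Real.exp (-x)) x := by
    simpa using (hasDerivAt_neg x).exp
  have h := (hasDerivAt_id x).mul h1
  exact h.congr_deriv (by simp; ring)

lemma gm_mono : MonotoneOn (fun y => y * Real.exp (-y)) (Set.Icc 0 1) := by
  apply monotoneOn_of_deriv_nonneg (convex_Icc 0 1)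
  · exact (continuous_id.mul (Real.continuous_exp.comp continuous_neg)).continuousOn
  · intro x _
    exact (gm_hasDeriv x).differentiableAt.differentiableWithinAt
  · intro x hx
    rw [(gm_hasDeriv x).deriv]
    rw [interior_Icc] at hx
    have := Real.exp_pos (-x)
    nlinarith [hx.2]

lemma gm_anti : AntitoneOn (fun y => y * Real.exp (-y)) (Set.Ici 1) := by
  apply antitoneOn_of_deriv_nonpos (convex_Ici 1)
  · exact (continuous_id.mul (Real.continuous_exp.comp continuous_neg)).continuousOn
  · intro x _
    exact (gm_hasDeriv x).differentiableAt.differentiableWithinAt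
  · intro x hx
    rw [(gm_hasDeriv x).deriv]
    rw [interior_Ici] at hx
    apply mul_nonpos_of_nonpos_of_nonneg
    · have : (1:ℝ) < x := hx; linarith
    · exact (Real.exp_pos _).le

lemma gm_exp_chord (t : ℝ) (h0 : 0 < t) (h1 : t ≤ 1) : Real.exp t < 1 + 2 * t := by
  have hc := convexOn_exp.2 (Set.mem_univ (0:ℝ)) (Set.mem_univ (1:ℝ))
    (show (0:ℝ) ≤ 1 - t by linarith) h0.le (by ring)
  simp only [smul_eq_mul, mul_zero, mul_one, zero_add, Real.exp_zero] at hc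
  nlinarith [Real.exp_one_lt_d9]

lemma gm_key (α m M : ℝ) (hα1 : 1 < α) (hα2 : α ≤ Real.exp 2) (hm0 : 0 < m) (hmM : m ≤ M)
    (hsup : ∀ c : ℝ, (∀ x, m ≤ x → x ≤ M → α * (x * Real.exp (-x)) ≤ c) → M ≤ c)
    (hinf : ∀ c : ℝ, (∀ x, m ≤ x → x ≤ M → c ≤ α * (x * Real.exp (-x))) → c ≤ m) :
    m = Real.log α ∧ M = Real.log α := by
  have hα0 : 0 < α := lt_trans one_pos hα1
  set s := Real.log α with hsdef
  have hαs : α = Real.exp s := (Real.exp_log hα0).symm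
  have hs0 : 0 < s := Real.log_pos hα1
  have hs2 : s ≤ 2 := by
    rw [hsdef, ← Real.log_exp 2]
    exact Real.log_le_log hα0 hα2
  set G : ℝ → ℝ := fun x => α * (x * Real.exp (-x)) with hGdef
  have Grw : ∀ x, G x = x * Real.exp (s - x) := by
    intro x
    rw [hGdef]; dsimp only
    rw [hαs, show Real.exp s * (x * Real.exp (-x)) = x * (Real.exp s * Real.exp (-x)) by ring,
        ← Real.exp_add]
    ring_nf
  have Gmono : ∀ x y, 0 ≤ x → x ≤ y → y ≤ 1 → G x ≤ G y := fun x y hx hxy hy =>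
    mul_le_mul_of_nonneg_left (gm_mono ⟨hx, hxy.trans hy⟩ ⟨hx.trans hxy, hy⟩ hxy) hα0.le
  have Ganti : ∀ x y, 1 ≤ x → x ≤ y → G y ≤ G x := fun x y hx hxy =>
    mul_le_mul_of_nonneg_left (gm_anti (Set.mem_Ici.mpr hx) (Set.mem_Ici.mpr (hx.trans hxy)) hxy) hα0.le
  have Gfix : G s = s := by rw [Grw]; simp
  have Ggt : ∀ x, 0 < x → x < s → x < G x := by
    intro x hx hxs; rw [Grw]
    nlinarith [Real.one_lt_exp_iff.mpr (show 0 < s - x by linarith)]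
  have Glt : ∀ x, 0 < x → s < x → G x < x := by
    intro x hx hxs; rw [Grw]
    nlinarith [Real.exp_lt_one_iff.mpr (show s - x < 0 by linarith)]
  rcases le_or_gt M 1 with hM1 | hM1
  · -- Case A : M ≤ 1
    have h1 : M ≤ G M := hsup (G M) (fun x hx1 hx2 => Gmono x M (hm0.le.trans hx1) hx2 hM1)
    have h2 : G m ≤ m := hinf (G m) (fun x hx1 hx2 => Gmono m x hm0.le hx1 (hx2.trans hM1))
    have hMs : M ≤ s := by
      by_contra h; push_neg at h
      exact absurd h1 (not_le.mpr (Glt M (hm0.trans_le hmM) h))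
    have hsm : s ≤ m := by
      by_contra h; push_neg at h
      exact absurd h2 (not_le.mpr (Ggt m hm0 h))
    constructor <;> linarith
  · -- Case B : 1 < M
    have hMe : M ≤ α * Real.exp (-1) :=
      hsup _ (fun x _ _ => mul_le_mul_of_nonneg_left (gm_F_le x) hα0.le)
    rcases lt_or_ge m 1 with hm1 | hm1
    · -- Subcase 3 : contradiction
      exfalso
      have he : Real.exp 1 < α := by
        have h : 1 < α * Real.exp (-1) := lt_of_lt_of_le hM1 hMe
        have h2 := mul_lt_mul_of_pos_right h (Real.exp_pos 1)
        rwa [one_mul, mul_assoc, ← Real.exp_add, neg_add_cancel, Real.exp_zero, mul_one] at h2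
      have hs1 : 1 < s := by
        rw [hsdef, ← Real.log_exp 1]
        exact Real.log_lt_log (Real.exp_pos 1) he
      have hmin : min (G m) (G M) ≤ m := by
        apply hinf
        intro x hx1 hx2
        rcases le_total x 1 with hx | hx
        · exact le_trans (min_le_left _ _) (Gmono m x hm0.le hx1 hx)
        · exact le_trans (min_le_right _ _) (Ganti x M hx hx2)
      have hGm : m < G m := Ggt m hm0 (by linarith)
      have hGM : G M ≤ m := by
        rcases le_total (G m) (G M) with h | h
        · rw [min_eq_left h] at hmin; linarith
        · rw [min_eq_right h] at hmin; linarith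
      have h3 : G (α * Real.exp (-1)) ≤ G M := Ganti M (α * Real.exp (-1)) hM1.le hMe
      have hrw : α * Real.exp (-1) = Real.exp (s - 1) := by
        rw [hαs, ← Real.exp_add]; ring_nf
      have hbig : 1 < G (α * Real.exp (-1)) := by
        rw [Grw, hrw, ← Real.exp_add]
        exact Real.one_lt_exp_iff.mpr
          (by linarith [gm_exp_chord (s - 1) (by linarith) (by linarith)])
      linarith
    · -- Subcase 2 : 1 ≤ m
      have hMle : M ≤ G m := hsup _ (fun x hx1 _ => Ganti m x hm1 hx1)
      have hmge : G M ≤ m := hinf _ (fun x hx1 hx2 => Ganti x M (le_trans hm1 hx1) hx2)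
      have hms : m ≤ s := by
        by_contra h; push_neg at h
        have := Glt m hm0 h
        linarith
      have hmeq : m = s := by
        by_contra h
        have hlt : m < s := lt_of_le_of_ne hms h
        have h1M : 1 ≤ M := le_trans hm1 hmM
        have hGm1 : 1 ≤ G m := le_trans h1M hMle
        have h4 : G (G m) ≤ G M := Ganti M (G m) h1M hMle
        have hGG : G (G m) ≤ m := le_trans h4 hmge
        have hs1 : 1 < s := lt_of_le_of_lt hm1 hlt
        have husm : StrictMonoOn (fun x => x + G x) (Set.Icc 1 s) := by
          apply strictMonoOn_of_deriv_pos (convex_Icc 1 s)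
          · exact (continuous_id.add (continuous_const.mul
              (continuous_id.mul (Real.continuous_exp.comp continuous_neg)))).continuousOn
          · intro x hx
            rw [interior_Icc] at hx
            have hd : HasDerivAt (fun x => x + G x) (1 + α * ((1 - x) * Real.exp (-x))) x :=
              (hasDerivAt_id x).add ((gm_hasDeriv x).const_mul α)
            rw [hd.deriv]
            have hx1 : 1 < x := hx.1
            have hx2 : x < s := hx.2
            have hkey : α * ((x - 1) * Real.exp (-x)) < 1 := by
              have hlog : Real.log (x - 1) < x - 2 := by
                have := Real.log_lt_sub_one_of_pos (show 0 < x - 1 by linarith)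
                  (show x - 1 ≠ 1 by intro hh; linarith)
                linarith
              calc α * ((x - 1) * Real.exp (-x))
                  = (x - 1) * (Real.exp s * Real.exp (-x)) := by rw [hαs]; ring
                _ = (x - 1) * Real.exp (s - x) := by rw [← Real.exp_add]; ring_nf
                _ = Real.exp (Real.log (x - 1) + (s - x)) := by
                    rw [Real.exp_add, Real.exp_log (by linarith)]
                _ < Real.exp 0 := Real.exp_lt_exp.mpr (by linarith)
                _ = 1 := Real.exp_zero
            have heq : α * ((1 - x) * Real.exp (-x)) = -(α * ((x - 1) * Real.exp (-x))) := by ring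
            linarith [hkey, heq]
        have hu : m + G m < s + G s := husm ⟨hm1, hms⟩ ⟨hs1.le, le_refl s⟩ hlt
        rw [Gfix] at hu
        have hGGeq : G (G m) = m * Real.exp (s - m + (s - G m)) := by
          rw [Grw (G m), Grw m, Real.exp_add]; ring
        have hcon : m < G (G m) := by
          rw [hGGeq]
          have h5 : 1 < Real.exp (s - m + (s - G m)) := Real.one_lt_exp_iff.mpr (by linarith)
          nlinarith
        linarith
      have hMeq : M = s := by
        rw [hmeq, Gfix] at hMle
        exact le_antisymm hMle (hmeq ▸ hmM)
      exact ⟨hmeq, hMeq⟩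

/-- Rigidity of bounded-below complete orbits: if `1 < α ≤ e²` and
`b` is a continuous solution of the renewal equation on `ℝ` with `b(t) ≥ δ⁻ > 0` for
all `t`, then `b ≡ ln α`. -/
theorem gurtin_maccamy_complete_orbit_rigidity
    (μ α : ℝ) (hμ : 0 < μ) (hα1 : 1 < α) (hα2 : α ≤ Real.exp 2)
    (f : ℝ → ℝ) (hf : ∀ x, f x = x * Real.exp (-x))
    (β : ℝ → ℝ) (hβmeas : Measurable β) (hβnonneg : ∀ a, 0 ≤ β a)
    (hβbdd : ∃ C : ℝ, ∀ᵐ a ∂(volume.restrict (Set.Ioi 0)), β a ≤ C)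
    (hβnorm : (∫ a in Set.Ioi (0:ℝ), β a * Real.exp (-μ * a)) = 1)
    (b : ℝ → ℝ) (hbcont : Continuous b)
    (hrenewal : ∀ t : ℝ,
      b t = α * f (∫ a in Set.Ioi (0:ℝ), β a * Real.exp (-μ * a) * b (t - a)))
    (δm : ℝ) (hδm : 0 < δm) (hblow : ∀ t : ℝ, δm ≤ b t) :
    ∀ t : ℝ, b t = Real.log α := by
  have hα0 : 0 < α := lt_trans one_pos hα1
  -- upper bound for b
  have hbub : ∀ t, b t ≤ α * Real.exp (-1) := by
    intro t
    rw [hrenewal t, hf]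
    exact mul_le_mul_of_nonneg_left (gm_F_le _) hα0.le
  -- sup and inf of b
  have hbdda : BddAbove (Set.range b) := ⟨α * Real.exp (-1), by rintro _ ⟨t, rfl⟩; exact hbub t⟩
  have hbddb : BddBelow (Set.range b) := ⟨δm, by rintro _ ⟨t, rfl⟩; exact hblow t⟩
  set m := sInf (Set.range b) with hmdef
  set M := sSup (Set.range b) with hMdef
  have hmb : ∀ t, m ≤ b t := fun t => csInf_le hbddb ⟨t, rfl⟩
  have hbM : ∀ t, b t ≤ M := fun t => le_csSup hbdda ⟨t, rfl⟩
  have hmδ : δm ≤ m := le_csInf ⟨b 0, 0, rfl⟩ (by rintro _ ⟨t, rfl⟩; exact hblow t)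
  have hm0 : 0 < m := lt_of_lt_of_le hδm hmδ
  have hmM : m ≤ M := (hmb 0).trans (hbM 0)
  -- the weight function
  set w : ℝ → ℝ := fun a => β a * Real.exp (-μ * a) with hwdef
  have hwnn : ∀ a, 0 ≤ w a := fun a => mul_nonneg (hβnonneg a) (Real.exp_pos _).le
  have hwmeas : Measurable w := hβmeas.mul (Real.measurable_exp.comp (measurable_id.const_mul _))
  obtain ⟨C, hC⟩ := hβbdd
  have hC' : ∀ᵐ a ∂(volume.restrict (Set.Ioi (0:ℝ))), β a ≤ max C 0 :=
    hC.mono fun a h => le_trans h (le_max_left _ _)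
  have hwint : IntegrableOn w (Set.Ioi (0:ℝ)) := by
    have hexp : IntegrableOn (fun a => max C 0 * Real.exp (-μ * a)) (Set.Ioi (0:ℝ)) :=
      (exp_neg_integrableOn_Ioi 0 hμ).const_mul (max C 0)
    apply Integrable.mono hexp hwmeas.aestronglyMeasurable
    filter_upwards [hC'] with a ha
    rw [Real.norm_eq_abs, Real.norm_eq_abs, abs_of_nonneg (hwnn a),
        abs_of_nonneg (mul_nonneg (le_max_right C 0) (Real.exp_pos _).le)]
    exact mul_le_mul_of_nonneg_right ha (Real.exp_pos _).le
  -- integrability of the integrand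
  have hBb : ∀ t, |b t| ≤ α * Real.exp (-1) := by
    intro t
    rw [abs_of_pos (lt_of_lt_of_le hδm (hblow t))]
    exact hbub t
  have hInt : ∀ t, IntegrableOn (fun a => w a * b (t - a)) (Set.Ioi (0:ℝ)) := by
    intro t
    apply Integrable.mono (hwint.mul_const (α * Real.exp (-1)))
    · exact (hwmeas.mul ((hbcont.comp (continuous_const.sub continuous_id)).measurable)).aestronglyMeasurable
    · apply Eventually.of_forall
      intro a
      rw [Real.norm_eq_abs, Real.norm_eq_abs, abs_mul, abs_of_nonneg (hwnn a),
          abs_of_nonneg (mul_nonneg (hwnn a) (by positivity : (0:ℝ) ≤ α * Real.exp (-1)))]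
      exact mul_le_mul_of_nonneg_left (hBb _) (hwnn a)
  -- bounds on the integral
  set I : ℝ → ℝ := fun t => ∫ a in Set.Ioi (0:ℝ), w a * b (t - a) with hIdef
  have hIlb : ∀ t, m ≤ I t := by
    intro t
    have h1 : (∫ a in Set.Ioi (0:ℝ), w a * m) = m := by
      rw [MeasureTheory.integral_mul_const, hβnorm, one_mul]
    calc m = ∫ a in Set.Ioi (0:ℝ), w a * m := h1.symm
      _ ≤ I t := setIntegral_mono_on (hwint.mul_const m) (hInt t) measurableSet_Ioi
          (fun a _ => mul_le_mul_of_nonneg_left (hmb _) (hwnn a))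
  have hIub : ∀ t, I t ≤ M := by
    intro t
    have h1 : (∫ a in Set.Ioi (0:ℝ), w a * M) = M := by
      rw [MeasureTheory.integral_mul_const, hβnorm, one_mul]
    calc I t ≤ ∫ a in Set.Ioi (0:ℝ), w a * M := setIntegral_mono_on (hInt t)
          (hwint.mul_const M) measurableSet_Ioi
          (fun a _ => mul_le_mul_of_nonneg_left (hbM _) (hwnn a))
      _ = M := h1
  have hbI : ∀ t, b t = α * (I t * Real.exp (-(I t))) := by
    intro t
    rw [hrenewal t, hf]
  -- apply the key lemma
  have hkey := gm_key α m M hα1 hα2 hm0 hmM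
    (fun c hc => csSup_le ⟨b 0, 0, rfl⟩ (by
      rintro _ ⟨t, rfl⟩
      rw [hbI t]
      exact hc (I t) (hIlb t) (hIub t)))
    (fun c hc => le_csInf ⟨b 0, 0, rfl⟩ (by
      rintro _ ⟨t, rfl⟩
      rw [hbI t]
      exact hc (I t) (hIlb t) (hIub t)))
  intro t
  exact le_antisymm (hkey.2 ▸ hbM t) (hkey.1 ▸ hmb t)
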